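/- (DCA sublinear rate, regime p3.) Let f1 ∈ F_{μ1,L1} and f2 ∈ F_{μ2,L2} with μ1 > −μ2 > 0, L2 > μ1, L1 > μ2, and (1/L1)·(2 + L2/μ2) ≤ 1/μ1 + 1/μ2 + 1/L2 ≤ 0. Let F := f1 − f2, let N ≥ 1, and let x⁰, …, x^N be a DCA sequence with subgradients g1^k ∈ ∂f1(x^k), g2^k ∈ ∂f2(x^k). Then (1/2)·min_{0 ≤ k ≤ N} ‖g1^k − g2^k‖² ≤ (F(x⁰) − F(x^N)) / (p·N), where p = (1/L1)·(1/μ1 + 1/μ2 + 1/L2)/(1/μ1 + 1/μ2 + 1/L2 − 1/L1) + 1/(L2 + μ2). -/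

import Mathlib

open RealInnerProductSpace

variable {H : Type*} [NormedAddCommGroup H] [InnerProductSpace ℝ H]

/-- `f` has lower curvature `μ`, i.e. `f - (μ/2)‖·‖²` is convex. -/
def HasLowerCurvature (μ : ℝ) (f : H → ℝ) : Prop :=
  ConvexOn ℝ Set.univ fun x => f x - μ / 2 * ‖x‖ ^ 2

/-- `f` has upper curvature `L`, i.e. `(L/2)‖·‖² - f` is convex. -/
def HasUpperCurvature (L : ℝ) (f : H → ℝ) : Prop :=
  ConvexOn ℝ Set.univ fun x => L / 2 * ‖x‖ ^ 2 - f x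

/-- `g` is a subgradient of `f` (of lower curvature `μ`) at `x`. -/
def IsSubgradient (μ : ℝ) (f : H → ℝ) (x g : H) : Prop :=
  ∀ y, f y ≥ f x + ⟪g, y - x⟫ + μ / 2 * ‖y - x‖ ^ 2


lemma convex_affine_lower {ψ : H → ℝ} (hc : ConvexOn ℝ Set.univ ψ)
    {y u : H} {c : ℝ} (hc0 : 0 ≤ c)
    (hub : ∀ z, ψ z ≤ ψ y + ⟪u, z - y⟫ + c * ‖z - y‖ ^ 2) (z : H) :
    ψ y + ⟪u, z - y⟫ ≤ ψ z := by
  by_contra hlt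
  push_neg at hlt
  set ε := ψ y + ⟪u, z - y⟫ - ψ z with hε
  have hεpos : 0 < ε := by simp only [hε]; linarith
  set C := c * ‖z - y‖ ^ 2 with hC
  have hCnn : 0 ≤ C := by positivity
  set t := min 1 (ε / (2 * (C + 1))) with ht
  have htpos : 0 < t := lt_min one_pos (by positivity)
  have ht1 : t ≤ 1 := min_le_left _ _
  have hw := hub (y + t • (y - z))
  have hwy : (y + t • (y - z)) - y = (-t) • (z - y) := by module
  rw [hwy, real_inner_smul_right, norm_smul] at hw
  have habs : ‖(-t)‖ = t := by rw [Real.norm_eq_abs, abs_neg, abs_of_pos htpos]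
  rw [habs] at hw
  have h1t : (0:ℝ) < 1 + t := by positivity
  have h1t' : (1:ℝ) + t ≠ 0 := ne_of_gt h1t
  have hcm := hc.2 (Set.mem_univ (y + t • (y - z))) (Set.mem_univ z)
      (show (0:ℝ) ≤ 1/(1+t) by positivity) (show (0:ℝ) ≤ t/(1+t) by positivity)
      (show 1/(1+t) + t/(1+t) = 1 by field_simp)
  have hcomb : (1/(1+t)) • (y + t • (y - z)) + (t/(1+t)) • z = y := by
    match_scalars <;> field_simp <;> ring
  rw [hcomb] at hcm
  simp only [smul_eq_mul] at hcm
  have hcm' : (1 + t) * ψ y ≤ ψ (y + t • (y - z)) + t * ψ z := by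
    have h := mul_le_mul_of_nonneg_left hcm (le_of_lt h1t)
    have he : (1+t) * (1/(1+t) * ψ (y + t • (y - z)) + t/(1+t) * ψ z)
        = ψ (y + t • (y - z)) + t * ψ z := by field_simp
    rw [he] at h
    linarith
  -- hw : ψ (y + t•(y−z)) ≤ ψ y + (−t) * ⟪u,z−y⟫ + c * (t * ‖z−y‖)^2
  have hw2 : ψ (y + t • (y - z)) ≤ ψ y - t * ⟪u, z - y⟫ + C * t^2 := by
    have he2 : c * (t * ‖z - y‖)^2 = C * t^2 := by rw [hC]; ring
    rw [he2] at hw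
    linarith
  have hdiv : ψ y + ⟪u, z - y⟫ - C * t ≤ ψ z := by
    have h3 : t * (ψ y + ⟪u, z - y⟫ - C * t) ≤ t * ψ z := by nlinarith
    exact le_of_mul_le_mul_left h3 htpos
  have hCt : C * t ≤ ε / 2 := by
    have h4 : t ≤ ε / (2 * (C + 1)) := min_le_right _ _
    have : C * t ≤ C * (ε / (2 * (C + 1))) := mul_le_mul_of_nonneg_left h4 hCnn
    have h5 : C * (ε / (2 * (C + 1))) ≤ ε / 2 := by
      rw [show C * (ε / (2 * (C + 1))) = (C*ε) / (2*(C+1)) by ring,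
        div_le_div_iff₀ (by positivity) (by norm_num : (0:ℝ) < 2)]
      nlinarith
    linarith
  simp only [hε] at hCt hdiv ⊢
  linarith

lemma descent_lemma {μ L : ℝ} {f : H → ℝ} (hup : HasUpperCurvature L f)
    (hμL : μ ≤ L) {y g : H} (hg : IsSubgradient μ f y g) (z : H) :
    f z ≤ f y + ⟪g, z - y⟫ + L / 2 * ‖z - y‖ ^ 2 := by
  have hψ : ConvexOn ℝ Set.univ fun w => L / 2 * ‖w‖ ^ 2 - f w := hup
  have hexp : ∀ w : H, ‖w‖^2 = ‖y‖^2 + 2*⟪y, w - y⟫ + ‖w - y‖^2 := by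
    intro w
    have h0 : w = y + (w - y) := by abel
    nth_rewrite 1 [h0]
    rw [norm_add_sq_real]
  have hub : ∀ w, (L/2*‖w‖^2 - f w) ≤ (L/2*‖y‖^2 - f y) + ⟪L • y - g, w - y⟫ + (L - μ)/2 * ‖w - y‖^2 := by
    intro w
    have h1 := hg w
    have h2 : L/2*‖w‖^2 = L/2*‖y‖^2 + L*⟪y, w - y⟫ + L/2*‖w - y‖^2 := by
      rw [hexp w]; ring
    rw [inner_sub_left, real_inner_smul_left]
    linarith
  have hlow := convex_affine_lower hψ (by linarith : (0:ℝ) ≤ (L - μ)/2) hub z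
  rw [inner_sub_left, real_inner_smul_left] at hlow
  have h2 : L/2*‖z‖^2 = L/2*‖y‖^2 + L*⟪y, z - y⟫ + L/2*‖z - y‖^2 := by
    rw [hexp z]; ring
  linarith

lemma interp_strict {μ L : ℝ} {f : H → ℝ} (hup : HasUpperCurvature L f)
    (hμL : μ < L) {x y gx gy : H} (hgx : IsSubgradient μ f x gx)
    (hgy : IsSubgradient μ f y gy) :
    f y + ⟪gy, x - y⟫ + μ/2 * ‖x - y‖^2 + 1/(2*(L - μ)) * ‖gx - gy - μ • (x - y)‖^2 ≤ f x := by
  have hLμ : (0:ℝ) < L - μ := by linarith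
  set w := gx - gy - μ • (x - y) with hw
  set δ := 1/(L - μ) with hδ
  set z := x - δ • w with hz
  have ha := hgy z
  have hb := descent_lemma hup (le_of_lt hμL) hgx z
  have hzy : z - y = (x - y) - δ • w := by rw [hz]; module
  have hzx : z - x = -(δ • w) := by rw [hz]; module
  rw [hzy, inner_sub_right, real_inner_smul_right, norm_sub_sq_real,
    real_inner_smul_right, norm_smul, Real.norm_eq_abs, mul_pow, sq_abs] at ha
  rw [hzx, inner_neg_right, real_inner_smul_right, norm_neg, norm_smul,
    Real.norm_eq_abs, mul_pow, sq_abs] at hb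
  have hkey : ⟪gx, w⟫ - ⟪gy, w⟫ - μ*⟪x - y, w⟫ = ‖w‖^2 := by
    rw [← real_inner_self_eq_norm_sq]
    nth_rewrite 4 [hw]
    simp only [inner_sub_left, real_inner_smul_left]
  have hδL : δ * (L - μ) = 1 := by rw [hδ]; field_simp
  have e6 : (L - μ) * δ^2 * ‖w‖^2 = δ * ‖w‖^2 := by
    calc (L - μ) * δ^2 * ‖w‖^2 = (δ*(L-μ))*(δ*‖w‖^2) := by ring
    _ = δ * ‖w‖^2 := by rw [hδL]; ring
  have e7 : δ*⟪gx, w⟫ - δ*⟪gy, w⟫ - δ*(μ*⟪x - y, w⟫) = δ*‖w‖^2 := by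
    calc δ*⟪gx, w⟫ - δ*⟪gy, w⟫ - δ*(μ*⟪x - y, w⟫)
        = δ*(⟪gx, w⟫ - ⟪gy, w⟫ - μ*⟪x - y, w⟫) := by ring
    _ = δ*‖w‖^2 := by rw [hkey]
  have e8 : 1/(2*(L - μ)) * ‖w‖^2 = δ/2 * ‖w‖^2 := by
    rw [hδ]; field_simp
  rw [e8]
  nlinarith [ha, hb, e6, e7]

lemma subgrad_eq {μ : ℝ} {f : H → ℝ} (hup : HasUpperCurvature μ f)
    {x y gx gy : H} (hgx : IsSubgradient μ f x gx) (hgy : IsSubgradient μ f y gy) :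
    gx - gy - μ • (x - y) = 0 := by
  set v := μ • (x - y) - (gx - gy) with hv
  have hlin : ∀ t : ℝ, (f y + ⟪gy, x - y⟫ + μ/2*‖x - y‖^2 - f x) + t * ‖v‖^2 ≤ 0 := by
    intro t
    have ha := hgy (x + t • v)
    have hb := descent_lemma hup le_rfl hgx (x + t • v)
    have h1 : x + t • v - y = (x - y) + t • v := by module
    have h2 : x + t • v - x = t • v := by module
    rw [h1, inner_add_right, real_inner_smul_right, norm_add_sq_real,
      real_inner_smul_right, norm_smul, Real.norm_eq_abs, mul_pow, sq_abs] at ha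
    rw [h2, real_inner_smul_right, norm_smul, Real.norm_eq_abs, mul_pow, sq_abs] at hb
    have hkey : μ*⟪x - y, v⟫ + ⟪gy, v⟫ - ⟪gx, v⟫ = ‖v‖^2 := by
      rw [← real_inner_self_eq_norm_sq]
      nth_rewrite 4 [hv]
      simp only [inner_sub_left, real_inner_smul_left]
      try ring
    have e7 : t*(μ*⟪x - y, v⟫) + t*⟪gy, v⟫ - t*⟪gx, v⟫ = t*‖v‖^2 := by
      calc t*(μ*⟪x - y, v⟫) + t*⟪gy, v⟫ - t*⟪gx, v⟫
          = t*(μ*⟪x - y, v⟫ + ⟪gy, v⟫ - ⟪gx, v⟫) := by ring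
      _ = t*‖v‖^2 := by rw [hkey]
    nlinarith [ha, hb, e7]
  have hv2 : ‖v‖^2 = 0 := by
    rcases eq_or_ne (‖v‖^2) 0 with h | h
    · exact h
    · exfalso
      set aa := f y + ⟪gy, x - y⟫ + μ/2*‖x - y‖^2 - f x with haa
      have := hlin ((1 - aa)/‖v‖^2)
      rw [div_mul_cancel₀ _ h] at this
      linarith
  have hv0 : v = 0 := by
    have : ‖v‖ = 0 := by
      have := sq_abs ‖v‖
      nlinarith [hv2, abs_nonneg ‖v‖, norm_nonneg v]
    exact norm_eq_zero.mp this
  have : gx - gy - μ • (x - y) = -v := by rw [hv]; module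
  rw [this, hv0, neg_zero]

lemma interp_scaled {μ L : ℝ} {f : H → ℝ} (hup : HasUpperCurvature L f)
    (hμL : μ ≤ L) {x y gx gy : H} (hgx : IsSubgradient μ f x gx)
    (hgy : IsSubgradient μ f y gy) :
    ‖gx - gy - μ • (x - y)‖^2 ≤ 2*(L - μ) * (f x - f y - ⟪gy, x - y⟫ - μ/2 * ‖x - y‖^2) := by
  rcases eq_or_lt_of_le hμL with hEq | hLt
  · subst hEq
    rw [subgrad_eq hup hgx hgy]
    simp
  · have h := interp_strict hup hLt hgx hgy
    have hpos : (0:ℝ) < L - μ := by linarith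
    have h2 : 1/(2*(L - μ)) * ‖gx - gy - μ • (x - y)‖^2
        ≤ f x - f y - ⟪gy, x - y⟫ - μ/2 * ‖x - y‖^2 := by linarith
    have h3 := mul_le_mul_of_nonneg_left h2 (by positivity : (0:ℝ) ≤ 2*(L - μ))
    calc ‖gx - gy - μ • (x - y)‖^2
        = 2*(L - μ) * (1/(2*(L - μ)) * ‖gx - gy - μ • (x - y)‖^2) := by
          field_simp
    _ ≤ 2*(L - μ) * (f x - f y - ⟪gy, x - y⟫ - μ/2 * ‖x - y‖^2) := h3

lemma expand_sub_smul (p q : H) (c : ℝ) :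
    ‖p - c • q‖^2 = ‖p‖^2 - 2*c*⟪p, q⟫ + c^2*‖q‖^2 := by
  rw [norm_sub_sq_real, real_inner_smul_right, norm_smul, Real.norm_eq_abs, mul_pow, sq_abs]
  ring

lemma expand_smul_smul (p q : H) (c d : ℝ) :
    ‖c • p - d • q‖^2 = c^2*‖p‖^2 - 2*c*d*⟪p, q⟫ + d^2*‖q‖^2 := by
  rw [norm_sub_sq_real, real_inner_smul_left, real_inner_smul_right, norm_smul, norm_smul,
    Real.norm_eq_abs, Real.norm_eq_abs, mul_pow, mul_pow, sq_abs, sq_abs]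
  ring

lemma nn_of_mul {c E : ℝ} (hc : 0 < c) (h : 0 ≤ c * E) : 0 ≤ E := by nlinarith

set_option maxHeartbeats 1000000 in
lemma dca_step {mu1 mu2 L1 L2 T K : ℝ} {f1 f2 : H → ℝ}
    (h1 : -mu2 < mu1) (h2 : 0 < -mu2) (h3 : mu1 < L2)
    (hL1 : mu1 ≤ L1)
    (hTdef : T = mu1*mu2 + mu1*L2 + mu2*L2)
    (hKdef : K = L1*T - mu1*mu2*L2)
    (hT : 0 ≤ T)
    (h1up : HasUpperCurvature L1 f1) (h2up : HasUpperCurvature L2 f2)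
    {a b u1 u2 v2 : H}
    (hu1 : IsSubgradient mu1 f1 a u1)
    (hu2b : IsSubgradient mu1 f1 b u2)
    (hu2a : IsSubgradient mu2 f2 a u2)
    (hv2 : IsSubgradient mu2 f2 b v2) :
    T/(2*K)*‖u1 - u2‖^2 + 1/(2*(L2 + mu2))*‖u2 - v2‖^2
      ≤ (f1 a - f2 a) - (f1 b - f2 b) := by
  have hmu1 : 0 < mu1 := by linarith
  have hmu2 : mu2 < 0 := by linarith
  have hL2 : 0 < L2 := by linarith
  have hL2p : 0 < L2 + mu2 := by linarith
  have hL2m : 0 < L2 - mu2 := by linarith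
  have hL1p : 0 < L1 := by linarith
  have hK : 0 < K := by
    rw [hKdef]
    nlinarith [mul_pos hmu1 hL2, mul_nonneg (le_of_lt hL1p) hT]
  -- interpolation inequalities, in scalar form
  have hI1 : ‖u1 - u2‖^2 - 2*mu1*⟪u1 - u2, a - b⟫ + mu1^2*‖a - b‖^2
      ≤ 2*(L1 - mu1)*(f1 a - f1 b - ⟪u2, a - b⟫ - mu1/2*‖a - b‖^2) := by
    have h := interp_scaled h1up hL1 hu1 hu2b
    rwa [show u1 - u2 - mu1 • (a - b) = (u1 - u2) - mu1 • (a - b) from rfl,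
      expand_sub_smul] at h
  have hW : 0 ≤ f1 a - f1 b - ⟪u2, a - b⟫ - mu1/2*‖a - b‖^2 := by
    have h := hu2b a
    linarith
  have hI4 : ‖u2 - v2‖^2 - 2*mu2*(⟪u2, a - b⟫ - ⟪v2, a - b⟫) + mu2^2*‖a - b‖^2
      ≤ 2*(L2 - mu2)*(f2 b - f2 a + ⟪u2, a - b⟫ - mu2/2*‖a - b‖^2) := by
    have h := interp_scaled h2up (by linarith : mu2 ≤ L2) hv2 hu2a
    have hflip : v2 - u2 - mu2 • (b - a) = -((u2 - v2) - mu2 • (a - b)) := by module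
    rw [hflip, norm_neg, show b - a = -(a - b) from (neg_sub a b).symm, inner_neg_right,
      norm_neg, expand_sub_smul, inner_sub_left] at h
    linarith
  have hI3 : ‖u2 - v2‖^2 - 2*mu2*(⟪u2, a - b⟫ - ⟪v2, a - b⟫) + mu2^2*‖a - b‖^2
      ≤ 2*(L2 - mu2)*(f2 a - f2 b - ⟪v2, a - b⟫ - mu2/2*‖a - b‖^2) := by
    have h := interp_scaled h2up (by linarith : mu2 ≤ L2) hu2a hv2
    rw [show u2 - v2 - mu2 • (a - b) = (u2 - v2) - mu2 • (a - b) from rfl,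
      expand_sub_smul, inner_sub_left] at h
    linarith
  have hsos : (0:ℝ) ≤ K^2*‖a - b‖^2 - 2*K*(mu1*(L2+mu2))*⟪u1 - u2, a - b⟫
      + (mu1*(L2+mu2))^2*‖u1 - u2‖^2 := by
    have h := sq_nonneg ‖K • (a - b) - (mu1*(L2+mu2)) • (u1 - u2)‖
    rw [expand_smul_smul, real_inner_comm] at h
    linarith
  rcases eq_or_lt_of_le hL1 with hEq | hLt
  · -- degenerate case L1 = mu1
    subst hEq
    have hd := subgrad_eq h1up hu1 hu2b
    have hdv : u1 - u2 = mu1 • (a - b) := by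
      have := sub_eq_zero.mp hd
      exact this
    have hA3d : ‖u1 - u2‖^2 = mu1^2 * ‖a - b‖^2 := by
      rw [hdv, norm_smul, Real.norm_eq_abs, mul_pow, sq_abs]
    have hslack : 0 ≤ ((f1 a - f2 a) - (f1 b - f2 b))
        - (T/(2*K)*‖u1 - u2‖^2 + 1/(2*(L2 + mu2))*‖u2 - v2‖^2) := by
      have hKne : K ≠ 0 := ne_of_gt hK
      have key0 : (2*(L2+mu2)*(L2-mu2)) * (((f1 a - f2 a) - (f1 b - f2 b))
            - (T/(2*K)*‖u1 - u2‖^2 + 1/(2*(L2 + mu2))*‖u2 - v2‖^2))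
          = 2*(L2+mu2)*(L2-mu2)*(f1 a - f1 b - ⟪u2, a - b⟫ - mu1/2*‖a - b‖^2)
            + L2*(2*(L2 - mu2)*(f2 b - f2 a + ⟪u2, a - b⟫ - mu2/2*‖a - b‖^2)
                - (‖u2 - v2‖^2 - 2*mu2*(⟪u2, a - b⟫ - ⟪v2, a - b⟫) + mu2^2*‖a - b‖^2))
            + (-mu2)*(2*(L2 - mu2)*(f2 a - f2 b - ⟪v2, a - b⟫ - mu2/2*‖a - b‖^2)
                - (‖u2 - v2‖^2 - 2*mu2*(⟪u2, a - b⟫ - ⟪v2, a - b⟫) + mu2^2*‖a - b‖^2)) := by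
        have hL2pne : L2 + mu2 ≠ 0 := ne_of_gt hL2p
        rw [hA3d]
        field_simp [hKne, hL2pne]
        rw [hKdef, hTdef]
        ring
      have hRHS : 0 ≤ 2*(L2+mu2)*(L2-mu2)*(f1 a - f1 b - ⟪u2, a - b⟫ - mu1/2*‖a - b‖^2)
            + L2*(2*(L2 - mu2)*(f2 b - f2 a + ⟪u2, a - b⟫ - mu2/2*‖a - b‖^2)
                - (‖u2 - v2‖^2 - 2*mu2*(⟪u2, a - b⟫ - ⟪v2, a - b⟫) + mu2^2*‖a - b‖^2))
            + (-mu2)*(2*(L2 - mu2)*(f2 a - f2 b - ⟪v2, a - b⟫ - mu2/2*‖a - b‖^2)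
                - (‖u2 - v2‖^2 - 2*mu2*(⟪u2, a - b⟫ - ⟪v2, a - b⟫) + mu2^2*‖a - b‖^2)) := by
        have c1 : (0:ℝ) ≤ 2*(L2+mu2)*(L2-mu2) := by positivity
        have t1 := mul_nonneg c1 hW
        have t2 := mul_nonneg (le_of_lt hL2) (sub_nonneg.mpr hI4)
        have t3 := mul_nonneg (le_of_lt h2) (sub_nonneg.mpr hI3)
        linarith
      exact nn_of_mul (by positivity) (key0 ▸ hRHS)
    linarith
  · -- strict case mu1 < L1
    have hD1 : (0:ℝ) < L1 - mu1 := by linarith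
    have hslack : 0 ≤ ((f1 a - f2 a) - (f1 b - f2 b))
        - (T/(2*K)*‖u1 - u2‖^2 + 1/(2*(L2 + mu2))*‖u2 - v2‖^2) := by
      have hKne : K ≠ 0 := ne_of_gt hK
      have key : (4*(L1-mu1)*K*(L2+mu2)*(L2-mu2)) * (((f1 a - f2 a) - (f1 b - f2 b))
            - (T/(2*K)*‖u1 - u2‖^2 + 1/(2*(L2 + mu2))*‖u2 - v2‖^2))
          = 2*K*(L2+mu2)*(L2-mu2)*(2*(L1 - mu1)*(f1 a - f1 b - ⟪u2, a - b⟫ - mu1/2*‖a - b‖^2)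
                - (‖u1 - u2‖^2 - 2*mu1*⟪u1 - u2, a - b⟫ + mu1^2*‖a - b‖^2))
            + 2*(L1-mu1)*K*L2*(2*(L2 - mu2)*(f2 b - f2 a + ⟪u2, a - b⟫ - mu2/2*‖a - b‖^2)
                - (‖u2 - v2‖^2 - 2*mu2*(⟪u2, a - b⟫ - ⟪v2, a - b⟫) + mu2^2*‖a - b‖^2))
            + 2*(L1-mu1)*K*(-mu2)*(2*(L2 - mu2)*(f2 a - f2 b - ⟪v2, a - b⟫ - mu2/2*‖a - b‖^2)
                - (‖u2 - v2‖^2 - 2*mu2*(⟪u2, a - b⟫ - ⟪v2, a - b⟫) + mu2^2*‖a - b‖^2))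
            + 2*(L2-mu2)*(K^2*‖a - b‖^2 - 2*K*(mu1*(L2+mu2))*⟪u1 - u2, a - b⟫
                + (mu1*(L2+mu2))^2*‖u1 - u2‖^2) := by
        have hL2pne : L2 + mu2 ≠ 0 := ne_of_gt hL2p
        field_simp [hKne, hL2pne]
        rw [hKdef, hTdef]
        ring
      have hRHS : 0 ≤ 2*K*(L2+mu2)*(L2-mu2)*(2*(L1 - mu1)*(f1 a - f1 b - ⟪u2, a - b⟫ - mu1/2*‖a - b‖^2)
                - (‖u1 - u2‖^2 - 2*mu1*⟪u1 - u2, a - b⟫ + mu1^2*‖a - b‖^2))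
            + 2*(L1-mu1)*K*L2*(2*(L2 - mu2)*(f2 b - f2 a + ⟪u2, a - b⟫ - mu2/2*‖a - b‖^2)
                - (‖u2 - v2‖^2 - 2*mu2*(⟪u2, a - b⟫ - ⟪v2, a - b⟫) + mu2^2*‖a - b‖^2))
            + 2*(L1-mu1)*K*(-mu2)*(2*(L2 - mu2)*(f2 a - f2 b - ⟪v2, a - b⟫ - mu2/2*‖a - b‖^2)
                - (‖u2 - v2‖^2 - 2*mu2*(⟪u2, a - b⟫ - ⟪v2, a - b⟫) + mu2^2*‖a - b‖^2))
            + 2*(L2-mu2)*(K^2*‖a - b‖^2 - 2*K*(mu1*(L2+mu2))*⟪u1 - u2, a - b⟫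
                + (mu1*(L2+mu2))^2*‖u1 - u2‖^2) := by
        have c1 : (0:ℝ) ≤ 2*K*(L2+mu2)*(L2-mu2) :=
          le_of_lt (mul_pos (mul_pos (mul_pos two_pos hK) hL2p) hL2m)
        have c2 : (0:ℝ) ≤ 2*(L1-mu1)*K*L2 :=
          le_of_lt (mul_pos (mul_pos (mul_pos two_pos hD1) hK) hL2)
        have c3 : (0:ℝ) ≤ 2*(L1-mu1)*K*(-mu2) :=
          le_of_lt (mul_pos (mul_pos (mul_pos two_pos hD1) hK) h2)
        have t1 := mul_nonneg c1 (sub_nonneg.mpr hI1)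
        have t2 := mul_nonneg c2 (sub_nonneg.mpr hI4)
        have t3 := mul_nonneg c3 (sub_nonneg.mpr hI3)
        have t4 := mul_nonneg (by positivity : (0:ℝ) ≤ 2*(L2-mu2)) hsos
        linarith
      have hF : (0:ℝ) < 4*(L1-mu1)*K*(L2+mu2)*(L2-mu2) := by positivity
      exact nn_of_mul hF (key ▸ hRHS)
    linarith


set_option maxHeartbeats 1000000 in
/-- DCA sublinear rate, regime p3. -/
theorem dca_rate_p3
    (mu1 mu2 L1 L2 : ℝ)
    (h1 : -mu2 < mu1) (h2 : 0 < -mu2) (h3 : mu1 < L2) (h4 : mu2 < L1)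
    (h5 : (1 / L1) * (2 + L2 / mu2) ≤ 1 / mu1 + 1 / mu2 + 1 / L2)
    (h6 : 1 / mu1 + 1 / mu2 + 1 / L2 ≤ 0)
    (f1 f2 : H → ℝ)
    (h1lo : HasLowerCurvature mu1 f1) (h1up : HasUpperCurvature L1 f1)
    (h2lo : HasLowerCurvature mu2 f2) (h2up : HasUpperCurvature L2 f2)
    (N : ℕ) (hN : 1 ≤ N) (x g1 g2 : ℕ → H)
    (hg1 : ∀ k ≤ N, IsSubgradient mu1 f1 (x k) (g1 k))
    (hg2 : ∀ k ≤ N, IsSubgradient mu2 f2 (x k) (g2 k))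
    (hdca : ∀ k < N, g1 (k + 1) = g2 k) :
    ((1 : ℝ) / 2) * ((Finset.range (N + 1)).inf' (Finset.nonempty_range_iff.mpr (Nat.succ_ne_zero N))
        fun k => ‖g1 k - g2 k‖ ^ 2) ≤
      ((f1 (x 0) - f2 (x 0)) - (f1 (x N) - f2 (x N))) /
        (((1 / L1) * (1 / mu1 + 1 / mu2 + 1 / L2) /
            (1 / mu1 + 1 / mu2 + 1 / L2 - 1 / L1) + 1 / (L2 + mu2)) * N) := by
  rcases subsingleton_or_nontrivial H with hsub | hnt
  · -- trivial space: everything is zero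
    have hx : x 0 = x N := Subsingleton.elim _ _
    have hinf : ((Finset.range (N + 1)).inf' (Finset.nonempty_range_iff.mpr (Nat.succ_ne_zero N))
        fun k => ‖g1 k - g2 k‖ ^ 2) = 0 := by
      apply le_antisymm
      · have h0 : (0:ℕ) ∈ Finset.range (N+1) := by simp
        have := Finset.inf'_le (fun k => ‖g1 k - g2 k‖ ^ 2) h0
        have hz : g1 0 - g2 0 = (0:H) := Subsingleton.elim _ _
        rw [hz] at this
        exact this.trans_eq (by simp)
      · apply Finset.le_inf'
        intro k hk
        positivity
    rw [hinf, hx]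
    simp
  · -- nontrivial space
    obtain ⟨v, hv⟩ := exists_ne (0 : H)
    have hL1 : mu1 ≤ L1 := by
      have h1lo' : ConvexOn ℝ Set.univ (fun w : H => f1 w - mu1 / 2 * ‖w‖ ^ 2) := h1lo
      have h1up' : ConvexOn ℝ Set.univ (fun w : H => L1 / 2 * ‖w‖ ^ 2 - f1 w) := h1up
      have hconv := h1lo'.add h1up'
      have hfun : ((fun w : H => f1 w - mu1 / 2 * ‖w‖ ^ 2) + (fun w : H => L1 / 2 * ‖w‖ ^ 2 - f1 w))
          = fun w : H => (L1 - mu1)/2 * ‖w‖^2 := by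
        funext w
        simp only [Pi.add_apply]
        ring
      rw [hfun] at hconv
      have h := hconv.2 (Set.mem_univ v) (Set.mem_univ (-v))
        (show (0:ℝ) ≤ 1/2 by norm_num) (show (0:ℝ) ≤ 1/2 by norm_num) (by norm_num)
      have hmid : (1/2:ℝ) • v + (1/2:ℝ) • (-v) = (0:H) := by module
      rw [hmid] at h
      simp only [norm_zero, norm_neg, smul_eq_mul] at h
      have hvp2 : 0 < ‖v‖^2 := by
        have : 0 < ‖v‖ := norm_pos_iff.mpr hv
        positivity
      nlinarith [h, hvp2]
    have hmu1 : 0 < mu1 := by linarith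
    have hmu2 : mu2 < 0 := by linarith
    have hL2 : 0 < L2 := by linarith
    have hL2p : 0 < L2 + mu2 := by linarith
    have hL1p : 0 < L1 := by linarith
    set T := mu1*mu2 + mu1*L2 + mu2*L2 with hTdef
    set K := L1*T - mu1*mu2*L2 with hKdef
    have hneg : mu1*mu2*L2 < 0 := by nlinarith [mul_pos hmu1 hL2]
    have hmu2ne : mu2 ≠ 0 := ne_of_lt hmu2
    have hrel : (1/mu1 + 1/mu2 + 1/L2)*(mu1*mu2*L2) = T := by
      rw [hTdef]
      field_simp
      ring
    have hT : 0 ≤ T := by nlinarith [mul_nonneg (neg_nonneg.mpr h6) (le_of_lt (neg_pos.mpr hneg))]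
    have hK : 0 < K := by
      have := mul_nonneg hL1p.le hT
      rw [hKdef]
      linarith
    have hKne : K ≠ 0 := ne_of_gt hK
    have hSden : (1 / mu1 + 1 / mu2 + 1 / L2 - 1 / L1) ≠ 0 := by
      intro hzero
      have hrel2 : (1 / mu1 + 1 / mu2 + 1 / L2 - 1 / L1)*(mu1*mu2*L2*L1) = K := by
        rw [hKdef, hTdef]
        field_simp [hmu1.ne', hmu2ne, hL2.ne', hL1p.ne']
        ring
      rw [hzero, zero_mul] at hrel2
      exact hKne (by linarith)
    have hq1eq : 1 / L1 * (1 / mu1 + 1 / mu2 + 1 / L2) /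
        (1 / mu1 + 1 / mu2 + 1 / L2 - 1 / L1) = T/K := by
      rw [div_eq_div_iff hSden hKne, hKdef, hTdef]
      field_simp [hmu1.ne', hmu2ne, hL2.ne', hL1p.ne']
      ring
    -- per-step inequality
    have hstep : ∀ k, k < N →
        T/(2*K)*‖g1 k - g2 k‖^2 + 1/(2*(L2+mu2))*‖g1 (k+1) - g2 (k+1)‖^2
          ≤ (f1 (x k) - f2 (x k)) - (f1 (x (k+1)) - f2 (x (k+1))) := by
      intro k hk
      have e1 : g1 (k+1) = g2 k := hdca k hk
      have hu2b : IsSubgradient mu1 f1 (x (k+1)) (g2 k) := by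
        rw [← e1]; exact hg1 (k+1) (by omega)
      have h := dca_step h1 h2 h3 hL1 hTdef hKdef hT h1up h2up
        (hg1 k (by omega)) hu2b (hg2 k (by omega)) (hg2 (k+1) (by omega))
      rw [show g1 (k+1) - g2 (k+1) = g2 k - g2 (k+1) by rw [e1]]
      exact h
    set m := (Finset.range (N + 1)).inf' (Finset.nonempty_range_iff.mpr (Nat.succ_ne_zero N))
        fun k => ‖g1 k - g2 k‖ ^ 2 with hm
    have hmle : ∀ k, k ≤ N → m ≤ ‖g1 k - g2 k‖^2 := by
      intro k hk
      apply Finset.inf'_le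
      simp only [Finset.mem_range]
      omega
    have hq1 : 0 ≤ T/(2*K) := div_nonneg hT (by linarith)
    have hq2 : (0:ℝ) < 1/(2*(L2+mu2)) := by positivity
    have hper : ∀ k, k < N → (T/(2*K) + 1/(2*(L2+mu2))) * m
        ≤ (f1 (x k) - f2 (x k)) - (f1 (x (k+1)) - f2 (x (k+1))) := by
      intro k hk
      have ha := mul_le_mul_of_nonneg_left (hmle k (by omega)) hq1
      have hb := mul_le_mul_of_nonneg_left (hmle (k+1) (by omega)) hq2.le
      have hc := hstep k hk
      have e : (T/(2*K) + 1/(2*(L2+mu2))) * m = T/(2*K)*m + 1/(2*(L2+mu2))*m := by ring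
      rw [e]
      linarith
    have hsum : (N:ℝ) * ((T/(2*K) + 1/(2*(L2+mu2))) * m)
        ≤ (f1 (x 0) - f2 (x 0)) - (f1 (x N) - f2 (x N)) := by
      have htel : ∑ k ∈ Finset.range N, ((f1 (x k) - f2 (x k)) - (f1 (x (k+1)) - f2 (x (k+1))))
          = (f1 (x 0) - f2 (x 0)) - (f1 (x N) - f2 (x N)) :=
        Finset.sum_range_sub' (fun k => f1 (x k) - f2 (x k)) N
      have hsle : ∑ _k ∈ Finset.range N, ((T/(2*K) + 1/(2*(L2+mu2))) * m)
          ≤ ∑ k ∈ Finset.range N, ((f1 (x k) - f2 (x k)) - (f1 (x (k+1)) - f2 (x (k+1)))) := by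
        apply Finset.sum_le_sum
        intro k hk
        exact hper k (Finset.mem_range.mp hk)
      rw [Finset.sum_const, Finset.card_range, nsmul_eq_mul, htel] at hsle
      exact hsle
    rw [hq1eq]
    have hNpos : (0:ℝ) < (N:ℝ) := by
      have : (1:ℝ) ≤ (N:ℝ) := by exact_mod_cast hN
      linarith
    have hppos : (0:ℝ) < (T/K + 1/(L2+mu2)) := by
      have hq1' : 0 ≤ T/K := div_nonneg hT hK.le
      have hq2' : (0:ℝ) < 1/(L2+mu2) := by positivity
      linarith
    rw [le_div_iff₀ (by positivity : (0:ℝ) < (T/K + 1/(L2+mu2)) * (N:ℝ))]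
    have e2 : 1/2 * m * ((T/K + 1/(L2+mu2)) * (N:ℝ))
        = (N:ℝ) * ((T/(2*K) + 1/(2*(L2+mu2))) * m) := by
      field_simp [hKne, ne_of_gt hL2p]
    rw [e2]
    exact hsum
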